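/- Consider Optimistic-FTRL on a convex compact set Y with loss vectors θ_1, ..., θ_T, hints m_1, ..., m_T, a β-strongly convex regularizer R, and step size η > 0. Let y_t = argmin_{y ∈ Y} ⟨y, Σ_{s<t} θ_s + m_t⟩ + (1/η)R(y), z_t = argmin_{y ∈ Y} ⟨y, Σ_{s<t} θ_s⟩ + (1/η)R(y), and z = argmin_{y ∈ Y} R(y). Then for any y* ∈ Y, Σ_{t=1}^T ⟨y_t − y*, θ_t⟩ ≤ (1/η)[R(y*) − R(z) − (β/2)(Σ_t ‖y_t − z_t‖² + Σ_t ‖y_t − z_{t+1}‖²)] + (η/β) Σ_t ‖θ_t − m_t‖_*². -/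

import Mathlib

lemma aux_strong_min {E : Type*} [NormedAddCommGroup E] [NormedSpace ℝ E]
    (Y : Set E) (hY : Convex ℝ Y)
    (R : E → ℝ) (R' : E → StrongDual ℝ E) (β η : ℝ) (hβ : 0 < β) (hη : 0 < η)
    (hsc : ∀ u ∈ Y, ∀ v ∈ Y, R u ≥ R v + R' v (u - v) + β / 2 * ‖u - v‖ ^ 2)
    (L : StrongDual ℝ E) (w : E) (hw : w ∈ Y)
    (hmin : ∀ v ∈ Y, L w + (1 / η) * R w ≤ L v + (1 / η) * R v)
    (u : E) (hu : u ∈ Y) :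
    L w + (1 / η) * R w + β / (2 * η) * ‖u - w‖ ^ 2 ≤ L u + (1 / η) * R u := by
  have claim : ∀ lam : ℝ, 0 < lam → lam ≤ 1 →
      β / (2 * η) * (1 - lam) * ‖u - w‖ ^ 2 ≤
        (L u + (1 / η) * R u) - (L w + (1 / η) * R w) := by
    intro lam h0 h1
    set wl : E := (1 - lam) • w + lam • u with hwl_def
    have hwl : wl ∈ Y := hY hw hu (by linarith) h0.le (by ring)
    have e1 : u - wl = (1 - lam) • (u - w) := by rw [hwl_def]; module
    have e2 : w - wl = (-lam) • (u - w) := by rw [hwl_def]; module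
    have h1R := hsc u hu wl hwl
    have h2R := hsc w hw wl hwl
    rw [e1] at h1R
    rw [e2] at h2R
    have n1 : ‖(1 - lam) • (u - w)‖ = (1 - lam) * ‖u - w‖ := by
      rw [norm_smul, Real.norm_eq_abs, abs_of_nonneg (by linarith)]
    have n2 : ‖(-lam) • (u - w)‖ = lam * ‖u - w‖ := by
      rw [norm_smul, Real.norm_eq_abs, abs_of_nonpos (by linarith), neg_neg]
    rw [n1, map_smul, smul_eq_mul] at h1R
    rw [n2, map_smul, smul_eq_mul] at h2R
    have hm := hmin wl hwl
    have hLwl : L wl = (1 - lam) * L w + lam * L u := by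
      rw [hwl_def]; simp [smul_eq_mul]
    rw [hLwl] at hm
    set g := R' wl (u - w) with hg
    set n := ‖u - w‖ with hn
    have hc1 : lam * (R wl + (1 - lam) * g + β / 2 * ((1 - lam) * n) ^ 2) ≤ lam * R u :=
      mul_le_mul_of_nonneg_left h1R.le h0.le
    have hc2 : (1 - lam) * (R wl + -lam * g + β / 2 * (lam * n) ^ 2) ≤ (1 - lam) * R w :=
      mul_le_mul_of_nonneg_left h2R.le (by linarith)
    have hcomb : R wl + β / 2 * (lam * (1 - lam)) * n ^ 2 ≤ lam * R u + (1 - lam) * R w := by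
      nlinarith [hc1, hc2]
    have hm2 : R w - R wl ≤ η * (lam * (L u - L w)) := by
      have t1 : (1 / η) * (R w - R wl) ≤ lam * (L u - L w) := by linarith
      have t2 := mul_le_mul_of_nonneg_left t1 hη.le
      calc R w - R wl = η * ((1 / η) * (R w - R wl)) := by field_simp
        _ ≤ η * (lam * (L u - L w)) := t2
    have h3 : β / 2 * (lam * (1 - lam)) * n ^ 2 ≤ lam * (R u - R w) + η * (lam * (L u - L w)) := by
      nlinarith [hcomb, hm2]
    have hlη : 0 < lam * η := mul_pos h0 hη
    have goal' : lam * η * (β / (2 * η) * (1 - lam) * n ^ 2) ≤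
        lam * η * ((L u + (1 / η) * R u) - (L w + (1 / η) * R w)) := by
      have e3 : lam * η * (β / (2 * η) * (1 - lam) * n ^ 2) = β / 2 * (lam * (1 - lam)) * n ^ 2 := by
        field_simp
      have e4 : lam * η * ((L u + (1 / η) * R u) - (L w + (1 / η) * R w)) =
          lam * (R u - R w) + η * (lam * (L u - L w)) := by
        field_simp; ring
      rw [e3, e4]; exact h3
    exact le_of_mul_le_mul_left goal' hlη
  have hD : 0 ≤ (L u + (1 / η) * R u) - (L w + (1 / η) * R w) := by linarith [hmin u hu]
  by_cases hn : ‖u - w‖ ^ 2 = 0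
  · rw [hn]; simpa using hmin u hu
  · have hn' : 0 < ‖u - w‖ ^ 2 := lt_of_le_of_ne (sq_nonneg _) (Ne.symm hn)
    have hcpos : 0 < β / (2 * η) * ‖u - w‖ ^ 2 := by positivity
    have key : β / (2 * η) * ‖u - w‖ ^ 2 ≤ (L u + (1 / η) * R u) - (L w + (1 / η) * R w) := by
      apply le_of_forall_pos_le_add
      intro ε hε
      set lam := min 1 (ε / (β / (2 * η) * ‖u - w‖ ^ 2)) with hlam
      have hl0 : 0 < lam := lt_min one_pos (div_pos hε hcpos)
      have hl1 : lam ≤ 1 := min_le_left _ _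
      have h := claim lam hl0 hl1
      have hsmall : β / (2 * η) * lam * ‖u - w‖ ^ 2 ≤ ε := by
        have hle : lam ≤ ε / (β / (2 * η) * ‖u - w‖ ^ 2) := min_le_right _ _
        calc β / (2 * η) * lam * ‖u - w‖ ^ 2 = lam * (β / (2 * η) * ‖u - w‖ ^ 2) := by ring
          _ ≤ (ε / (β / (2 * η) * ‖u - w‖ ^ 2)) * (β / (2 * η) * ‖u - w‖ ^ 2) :=
            mul_le_mul_of_nonneg_right hle hcpos.le
          _ = ε := div_mul_cancel₀ _ (ne_of_gt hcpos)
      have e : β / (2 * η) * (1 - lam) * ‖u - w‖ ^ 2 =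
          β / (2 * η) * ‖u - w‖ ^ 2 - β / (2 * η) * lam * ‖u - w‖ ^ 2 := by ring
      linarith
    linarith

theorem stmt_10 {E : Type*} [NormedAddCommGroup E] [NormedSpace ℝ E]
    (Y : Set E) (hY : Convex ℝ Y) (hYc : IsCompact Y)
    (R : E → ℝ) (R' : E → StrongDual ℝ E) (β η : ℝ) (hβ : 0 < β) (hη : 0 < η)
    (hsc : ∀ u ∈ Y, ∀ v ∈ Y, R u ≥ R v + R' v (u - v) + β / 2 * ‖u - v‖ ^ 2)
    (T : ℕ) (θ m : ℕ → StrongDual ℝ E) (y z : ℕ → E)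
    (hyY : ∀ t, y t ∈ Y) (hzY : ∀ t, z t ∈ Y)
    (hy : ∀ t, ∀ v ∈ Y,
      ((∑ s ∈ Finset.range t, θ s) + m t) (y t) + (1 / η) * R (y t) ≤
        ((∑ s ∈ Finset.range t, θ s) + m t) v + (1 / η) * R v)
    (hz : ∀ t, ∀ v ∈ Y,
      (∑ s ∈ Finset.range t, θ s) (z t) + (1 / η) * R (z t) ≤
        (∑ s ∈ Finset.range t, θ s) v + (1 / η) * R v) :
    ∀ ystar ∈ Y,
      ∑ t ∈ Finset.range T, θ t (y t - ystar) ≤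
        (1 / η) * (R ystar - R (z 0) -
          β / 2 * ((∑ t ∈ Finset.range T, ‖y t - z t‖ ^ 2) +
            ∑ t ∈ Finset.range T, ‖y t - z (t + 1)‖ ^ 2)) +
        (η / β) * ∑ t ∈ Finset.range T, ‖θ t - m t‖ ^ 2 := by
  intro ystar hstar
  set c := β / (2 * η) with hc_def
  have hcpos : 0 < c := by rw [hc_def]; positivity
  have hzs : ∀ t, ∀ u ∈ Y,
      (∑ s ∈ Finset.range t, θ s) (z t) + (1 / η) * R (z t) + c * ‖u - z t‖ ^ 2 ≤
        (∑ s ∈ Finset.range t, θ s) u + (1 / η) * R u :=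
    fun t u hu => aux_strong_min Y hY R R' β η hβ hη hsc _ (z t) (hzY t) (hz t) u hu
  have hys : ∀ t, ∀ u ∈ Y,
      ((∑ s ∈ Finset.range t, θ s) + m t) (y t) + (1 / η) * R (y t) + c * ‖u - y t‖ ^ 2 ≤
        ((∑ s ∈ Finset.range t, θ s) + m t) u + (1 / η) * R u :=
    fun t u hu => aux_strong_min Y hY R R' β η hβ hη hsc _ (y t) (hyY t) (hy t) u hu
  set F : ℕ → ℝ := fun t => (∑ s ∈ Finset.range t, θ s) (z t) + (1 / η) * R (z t) with hF_def
  have step : ∀ t, θ t (y t) + (F t - F (t + 1)) ≤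
      (η / β) * ‖θ t - m t‖ ^ 2 - c * ‖y t - z t‖ ^ 2 - c * ‖y t - z (t + 1)‖ ^ 2 := by
    intro t
    have hA := hzs t (y t) (hyY t)
    have hB := hys t (z (t + 1)) (hzY (t + 1))
    have hC := hzs (t + 1) (y t) (hyY t)
    have hSs : ∀ v : E, (∑ s ∈ Finset.range (t + 1), θ s) v =
        (∑ s ∈ Finset.range t, θ s) v + θ t v := by
      intro v; rw [Finset.sum_range_succ]; simp
    rw [hSs (z (t + 1)), hSs (y t)] at hC
    have hBapp : (∑ s ∈ Finset.range t, θ s) (y t) + m t (y t) + (1 / η) * R (y t)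
        + c * ‖y t - z (t + 1)‖ ^ 2 ≤
        (∑ s ∈ Finset.range t, θ s) (z (t + 1)) + m t (z (t + 1)) + (1 / η) * R (z (t + 1)) := by
      have hrev : ‖z (t + 1) - y t‖ = ‖y t - z (t + 1)‖ := norm_sub_rev _ _
      have := hB
      rw [ContinuousLinearMap.add_apply, ContinuousLinearMap.add_apply, hrev] at this
      linarith
    have esub : (θ t - m t) (y t - z (t + 1)) =
        θ t (y t) - m t (y t) - θ t (z (t + 1)) + m t (z (t + 1)) := by
      simp [ContinuousLinearMap.sub_apply, map_sub]; ring
    have h2cb : 2 * c * ‖y t - z (t + 1)‖ ^ 2 ≤ (θ t - m t) (y t - z (t + 1)) := by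
      rw [esub]; linarith [hBapp, hC]
    have hpab : (θ t - m t) (y t - z (t + 1)) ≤ ‖θ t - m t‖ * ‖y t - z (t + 1)‖ :=
      calc (θ t - m t) (y t - z (t + 1)) ≤ |(θ t - m t) (y t - z (t + 1))| := le_abs_self _
        _ = ‖(θ t - m t) (y t - z (t + 1))‖ := (Real.norm_eq_abs _).symm
        _ ≤ ‖θ t - m t‖ * ‖y t - z (t + 1)‖ := ContinuousLinearMap.le_opNorm _ _
    have h2cp : 2 * c * ((θ t - m t) (y t - z (t + 1))) ≤ ‖θ t - m t‖ ^ 2 := by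
      nlinarith [h2cb, hpab, sq_nonneg (‖θ t - m t‖ - 2 * c * ‖y t - z (t + 1)‖), hcpos,
        mul_le_mul_of_nonneg_left h2cb (by positivity : (0:ℝ) ≤ 2 * c),
        mul_le_mul_of_nonneg_left hpab (by positivity : (0:ℝ) ≤ 4 * c)]
    have hp : (θ t - m t) (y t - z (t + 1)) ≤ (η / β) * ‖θ t - m t‖ ^ 2 := by
      have he : (η / β) = 1 / (2 * c) := by rw [hc_def]; field_simp
      rw [he, mul_comm, ← div_eq_mul_one_div, le_div_iff₀ (by positivity : (0:ℝ) < 2 * c)]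
      nlinarith [h2cp]
    have hFt1 : F (t + 1) = (∑ s ∈ Finset.range t, θ s) (z (t + 1)) + θ t (z (t + 1))
        + (1 / η) * R (z (t + 1)) := by
      rw [hF_def]; dsimp only; rw [hSs (z (t + 1))]
    rw [hFt1, hF_def]
    dsimp only
    rw [esub] at hp
    linarith [hA, hBapp, hp]
  have sum_step := Finset.sum_le_sum (fun t (_ : t ∈ Finset.range T) => step t)
  have htel : ∑ t ∈ Finset.range T, (θ t (y t) + (F t - F (t + 1))) =
      (∑ t ∈ Finset.range T, θ t (y t)) + (F 0 - F T) := by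
    rw [Finset.sum_add_distrib, Finset.sum_range_sub']
  have hrhs : ∑ t ∈ Finset.range T, ((η / β) * ‖θ t - m t‖ ^ 2 - c * ‖y t - z t‖ ^ 2
      - c * ‖y t - z (t + 1)‖ ^ 2) =
      (η / β) * (∑ t ∈ Finset.range T, ‖θ t - m t‖ ^ 2)
      - c * (∑ t ∈ Finset.range T, ‖y t - z t‖ ^ 2)
      - c * (∑ t ∈ Finset.range T, ‖y t - z (t + 1)‖ ^ 2) := by
    rw [Finset.sum_sub_distrib, Finset.sum_sub_distrib, ← Finset.mul_sum, ← Finset.mul_sum,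
      ← Finset.mul_sum]
  rw [htel, hrhs] at sum_step
  have hF0 : F 0 = (1 / η) * R (z 0) := by rw [hF_def]; simp
  have hFT : F T ≤ (∑ t ∈ Finset.range T, θ t ystar) + (1 / η) * R ystar := by
    have h := hz T ystar hstar
    conv at h => rw [ContinuousLinearMap.sum_apply (s := Finset.range T) (x := ystar)]
    exact h
  have hlhs : ∑ t ∈ Finset.range T, θ t (y t - ystar) =
      (∑ t ∈ Finset.range T, θ t (y t)) - ∑ t ∈ Finset.range T, θ t ystar := by
    rw [← Finset.sum_sub_distrib]
    exact Finset.sum_congr rfl fun t _ => by rw [map_sub]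
  rw [hlhs]
  have hring : (1 / η) * (R ystar - R (z 0) -
      β / 2 * ((∑ t ∈ Finset.range T, ‖y t - z t‖ ^ 2) +
        ∑ t ∈ Finset.range T, ‖y t - z (t + 1)‖ ^ 2)) +
      (η / β) * ∑ t ∈ Finset.range T, ‖θ t - m t‖ ^ 2 =
      (1 / η) * R ystar - (1 / η) * R (z 0)
      - c * (∑ t ∈ Finset.range T, ‖y t - z t‖ ^ 2)
      - c * (∑ t ∈ Finset.range T, ‖y t - z (t + 1)‖ ^ 2)
      + (η / β) * ∑ t ∈ Finset.range T, ‖θ t - m t‖ ^ 2 := by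
    rw [hc_def]; ring
  rw [hring]
  linarith [sum_step, hFT, hF0.le, hF0.ge]
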